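/- For every graph G of treewidth at most k and every positive integer r, the weak r-coloring number of G satisfies wcol_r(G) ≤ C(r+k, k) (the binomial coefficient). -/

import Mathlib

variable {V : Type*}

/-- Weak r-reachability. -/
def WReach (G : SimpleGraph V) (π : LinearOrder V) (r : ℕ) (v : V) : Set V :=
  letI := π
  {u | u ≤ v ∧ ∃ p : G.Walk v u, p.IsPath ∧ p.length ≤ r ∧
      ∀ w ∈ p.support, w ≠ v → w ≠ u → u < w}

noncomputable def wcol [Fintype V] (G : SimpleGraph V) (r : ℕ) : ℕ :=
  sInf {k | ∃ π : LinearOrder V, ∀ v, (WReach G π r v).ncard ≤ k}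

set_option linter.unusedSectionVars false
set_option linter.unusedVariables false
set_option maxHeartbeats 1000000

open Finset SimpleGraph

section Abstract

variable {W : Type*} [Fintype W] [LinearOrder W]

inductive Desc (S : W → Finset W) : ℕ → W → W → Prop
  | refl (r x) : Desc S r x x
  | step {r x y u} : y ∈ S x → Desc S r y u → Desc S (r+1) x u

omit [LinearOrder W] in
lemma Desc.mono {S : W → Finset W} {r r' : ℕ} {x u : W}
    (h : Desc S r x u) (hr : r ≤ r') : Desc S r' x u := by
  induction h generalizing r' with
  | refl => exact Desc.refl _ _
  | @step r x y u hy _ IH =>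
    obtain ⟨m, rfl⟩ : ∃ m, r' = m + 1 := ⟨r' - 1, by omega⟩
    exact Desc.step hy (IH (by omega))

/-- ranked descending chains: `ρ` records `k` minus the number of elements of `S x` below
the next vertex. -/
inductive DescL (S : W → Finset W) (k : ℕ) : W → List ℕ → W → Prop
  | nil (u) : DescL S k u [] u
  | cons {x y u ρ L} : y ∈ S x → ((S x).filter (· < y)).card + ρ = k →
      DescL S k y L u → DescL S k x (ρ :: L) u

lemma below_card_inj {S : W → Finset W} {x y y' : W} (hy : y ∈ S x) (hy' : y' ∈ S x)
    (h : ((S x).filter (· < y)).card = ((S x).filter (· < y')).card) : y = y' := by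
  by_contra hne
  have key : ∀ a b : W, a ∈ S x → b ∈ S x → a < b →
      ((S x).filter (· < a)).card < ((S x).filter (· < b)).card := by
    intro a b ha hb hab
    refine Finset.card_lt_card ?_
    refine ⟨Finset.monotone_filter_right _ (fun z _ (hza : z < a) => lt_trans hza hab), fun hsub => ?_⟩
    have := hsub (Finset.mem_filter.mpr ⟨ha, hab⟩)
    exact absurd (Finset.mem_filter.mp this).2 (lt_irrefl a)
  rcases lt_or_gt_of_ne hne with hlt | hlt
  · exact absurd (key _ _ hy hy' hlt) (by omega)
  · exact absurd (key _ _ hy' hy hlt) (by omega)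

lemma DescL.det {S : W → Finset W} {k : ℕ} : ∀ {x L u u'},
    DescL S k x L u → DescL S k x L u' → u = u' := by
  intro x L u u' h
  induction h generalizing u' with
  | nil => intro h'; cases h'; rfl
  | @cons x y u ρ L hy hc _ IH =>
    intro h'
    cases h' with
    | cons hy' hc' hd' =>
      have := below_card_inj hy hy' (by omega)
      subst this
      exact IH hd'

/-- `NR r x u` : `u` is reachable from `x` by a ranked chain whose rank sequence
is non-increasing, has entries in `[1,k]`, and length at most `r`. -/
def NR (S : W → Finset W) (k : ℕ) (r : ℕ) (x u : W) : Prop :=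
  ∃ L : List ℕ, DescL S k x L u ∧ L.length ≤ r ∧ L.Pairwise (· ≥ ·) ∧ ∀ ρ ∈ L, 1 ≤ ρ ∧ ρ ≤ k

lemma NR.mono {S : W → Finset W} {k r r' : ℕ} {x u : W} (h : NR S k r x u) (hr : r ≤ r') :
    NR S k r' x u := by
  obtain ⟨L, h1, h2, h3, h4⟩ := h
  exact ⟨L, h1, le_trans h2 hr, h3, h4⟩


/-- number of vertices below `b` -/
noncomputable def bel (b : W) : ℕ := (Finset.univ.filter (· < b)).card

lemma bel_lt_bel {b' b : W} (h : b' < b) : bel b' < bel b := by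
  apply Finset.card_lt_card
  refine ⟨Finset.monotone_filter_right _ (fun z _ (hz : z < b') => lt_trans hz h), fun hsub => ?_⟩
  have := hsub (Finset.mem_filter.mpr ⟨Finset.mem_univ b', h⟩)
  exact absurd (Finset.mem_filter.mp this).2 (lt_irrefl b')

lemma bel_le_card (b : W) : bel b ≤ Fintype.card W :=
  le_trans (Finset.card_le_card (Finset.filter_subset _ _)) (le_of_eq (Finset.card_univ))

lemma glue (hS1 : ∀ x, ∀ y ∈ S x, y < x) (hS2 : ∀ x, (S x).card ≤ k)
    (hco : ∀ x, ∀ a ∈ S x, ∀ b ∈ S x, a < b → a ∈ S b) :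
    ∀ (M r : ℕ) (x b u : W), r * (Fintype.card W + 1) + bel b ≤ M →
      b ∈ S x → NR S k r b u → NR S k (r+1) x u := by
  intro M
  induction M using Nat.strong_induction_on with
  | _ M IH =>
    intro r x b u hM hb hNR
    obtain ⟨L, hdl, hlen, hsort, hbnd⟩ := hNR
    -- rank of b in S x
    have hfilter_lt : ((S x).filter (· < b)).card < (S x).card := by
      apply Finset.card_lt_card
      refine ⟨Finset.filter_subset _ _, fun hsub => ?_⟩
      have := hsub hb
      exact absurd (Finset.mem_filter.mp this).2 (lt_irrefl b)
    have hcardk : (S x).card ≤ k := hS2 x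
    set ρb := k - ((S x).filter (· < b)).card with hρb_def
    have hρb_card : ((S x).filter (· < b)).card + ρb = k := by omega
    have hρb1 : 1 ≤ ρb := by omega
    have hρbk : ρb ≤ k := by omega
    match L, hdl, hlen, hsort, hbnd with
    | [], hdl, hlen, hsort, hbnd =>
      cases hdl
      exact ⟨[ρb], DescL.cons hb hρb_card (DescL.nil _), by simp, List.pairwise_singleton _ _,
        by intro ρ hρ; simp at hρ; omega⟩
    | ρ' :: L', hdl, hlen, hsort, hbnd =>
      have hr1 : 1 ≤ r := le_trans (by simp) hlen
      cases hdl with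
      | @cons _ c _ _ _ hc hcard' hd' =>
        by_cases hle : ρ' ≤ ρb
        · refine ⟨ρb :: ρ' :: L', DescL.cons hb hρb_card (DescL.cons hc hcard' hd'),
            by simpa using hlen, ?_, ?_⟩
          · rw [List.pairwise_cons]
            refine ⟨?_, hsort⟩
            intro d hd
            rcases List.mem_cons.mp hd with rfl | hd
            · exact hle
            · exact le_trans (List.rel_of_pairwise_cons hsort hd) hle
          · intro ρ hρ
            rcases List.mem_cons.mp hρ with rfl | hρ
            · omega
            · exact hbnd ρ hρ
        · -- ρ' > ρb : reroute through some p ∈ S x with p < b, c ≤ p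
          push_neg at hle
          have hBsub : ∀ p ∈ (S x).filter (· < b), p ∈ S b := by
            intro p hp
            obtain ⟨hp1, hp2⟩ := Finset.mem_filter.mp hp
            exact hco x p hp1 b hb hp2
          have hex : ∃ p ∈ (S x).filter (· < b), ¬ (p < c) := by
            by_contra hcon
            push_neg at hcon
            have hsub : (S x).filter (· < b) ⊆ (S b).filter (· < c) := by
              intro p hp
              exact Finset.mem_filter.mpr ⟨hBsub p hp, hcon p hp⟩
            have := Finset.card_le_card hsub
            omega
          obtain ⟨p, hpB, hpc⟩ := hex
          obtain ⟨hpSx, hpb⟩ := Finset.mem_filter.mp hpB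
          have hcp : c ≤ p := le_of_not_gt hpc
          have hNRc : NR S k (r-1) c u := by
            refine ⟨L', hd', by simp at hlen; omega, (List.pairwise_cons.mp hsort).2,
              fun ρ hρ => hbnd ρ (List.mem_cons_of_mem _ hρ)⟩
          have hNRp : NR S k r p u := by
            rcases eq_or_lt_of_le hcp with rfl | hlt
            · exact hNRc.mono (by omega)
            · have hcSp : c ∈ S p := hco b c hc p (hBsub p hpB) hlt
              have hcall : NR S k ((r-1)+1) p u := by
                refine IH ((r-1) * (Fintype.card W + 1) + bel c) ?_ (r-1) p c u le_rfl hcSp hNRc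
                have h1 : bel c ≤ Fintype.card W := bel_le_card c
                have h2 : bel b ≥ 0 := Nat.zero_le _
                calc (r-1) * (Fintype.card W + 1) + bel c
                    < (r-1) * (Fintype.card W + 1) + (Fintype.card W + 1) := by omega
                  _ = ((r-1)+1) * (Fintype.card W + 1) := by ring
                  _ = r * (Fintype.card W + 1) := by congr 1; omega
                  _ ≤ M := by omega
              have : (r-1)+1 = r := by omega
              rwa [this] at hcall
          -- recurse at same r with p < b
          refine IH (r * (Fintype.card W + 1) + bel p) ?_ r x p u le_rfl hpSx hNRp
          have := bel_lt_bel hpb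
          omega


noncomputable def padSym (r : ℕ) (L : List ℕ) (hlen : L.length ≤ r) (hk : ∀ ρ ∈ L, ρ ≤ k) :
    Sym (Fin (k+1)) r :=
  ⟨((L.map (fun n => (⟨min n k, by omega⟩ : Fin (k+1)))) ++
      List.replicate (r - L.length) (⟨0, by omega⟩ : Fin (k+1)) : List (Fin (k+1))),
    by simp; omega⟩

lemma nr_count (v : W) (r : ℕ) :
    {u | NR S k r v u}.ncard ≤ Fintype.card (Sym (Fin (k+1)) r) := by
  classical
  have hanti : IsAntisymm (Fin (k+1)) (· ≥ ·) := ⟨fun a b h1 h2 => le_antisymm h2 h1⟩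
  set f : W → Sym (Fin (k+1)) r := fun u =>
    if h : NR S k r v u then
      padSym r h.choose (h.choose_spec.2.1) (fun ρ hρ => (h.choose_spec.2.2.2 ρ hρ).2)
    else Sym.replicate r ⟨0, by omega⟩ with hf
  have key : ∀ u ∈ {u | NR S k r v u}, ∀ u' ∈ {u | NR S k r v u}, f u = f u' → u = u' := by
    intro u hu u' hu' hfe
    simp only [Set.mem_setOf_eq] at hu hu'
    rw [hf] at hfe
    simp only [dif_pos hu, dif_pos hu'] at hfe
    set L := hu.choose with hL
    set L' := hu'.choose with hL'
    obtain ⟨hd, hlen, hsort, hbnd⟩ := hu.choose_spec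
    obtain ⟨hd', hlen', hsort', hbnd'⟩ := hu'.choose_spec
    -- equal multisets of sorted lists ⇒ equal padded lists
    have hperm : (padSym r L hlen (fun ρ hρ => (hbnd ρ hρ).2)).1 =
        (padSym r L' hlen' (fun ρ hρ => (hbnd' ρ hρ).2)).1 := congrArg Subtype.val hfe
    have sorted_pad : ∀ (L₀ : List ℕ), L₀.Pairwise (· ≥ ·) → (∀ ρ ∈ L₀, ρ ≤ k) →
        ((L₀.map (fun n => (⟨min n k, by omega⟩ : Fin (k+1)))) ++
          List.replicate (r - L₀.length) (⟨0, by omega⟩ : Fin (k+1))).Pairwise (· ≥ ·) := by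
      intro L₀ hs hbd
      rw [List.pairwise_append]
      refine ⟨List.Pairwise.map _ (fun a b (hab : a ≥ b) => by
          simp only [ge_iff_le, Fin.mk_le_mk]; omega) hs,
        List.pairwise_replicate.mpr (Or.inr (le_refl (⟨0, by omega⟩ : Fin (k+1)))), ?_⟩
      intro a ha b hb
      have := List.eq_of_mem_replicate hb
      subst this
      exact Fin.zero_le _
    have hlists : ((L.map (fun n => (⟨min n k, by omega⟩ : Fin (k+1)))) ++
          List.replicate (r - L.length) (⟨0, by omega⟩ : Fin (k+1))) =
        ((L'.map (fun n => (⟨min n k, by omega⟩ : Fin (k+1)))) ++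
          List.replicate (r - L'.length) (⟨0, by omega⟩ : Fin (k+1))) := by
      refine List.Perm.eq_of_pairwise' (r := fun a b : Fin (k+1) => a ≥ b) ?_ ?_ (Multiset.coe_eq_coe.mp hperm)
      · exact sorted_pad L hsort (fun ρ hρ => (hbnd ρ hρ).2)
      · exact sorted_pad L' hsort' (fun ρ hρ => (hbnd' ρ hρ).2)
    -- strip the padding: filter (· ≠ 0)
    have strip : ∀ (L₀ : List ℕ), (∀ ρ ∈ L₀, 1 ≤ ρ ∧ ρ ≤ k) →
        ((L₀.map (fun n => (⟨min n k, by omega⟩ : Fin (k+1)))) ++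
          List.replicate (r - L₀.length) (⟨0, by omega⟩ : Fin (k+1))).filter
            (fun x => decide (x ≠ ⟨0, by omega⟩)) =
        L₀.map (fun n => (⟨min n k, by omega⟩ : Fin (k+1))) := by
      intro L₀ hbd
      rw [List.filter_append]
      have h1 : (L₀.map (fun n => (⟨min n k, by omega⟩ : Fin (k+1)))).filter
          (fun x => decide (x ≠ ⟨0, by omega⟩)) =
          L₀.map (fun n => (⟨min n k, by omega⟩ : Fin (k+1))) := by
        apply List.filter_eq_self.mpr
        intro a ha
        obtain ⟨n, hn, rfl⟩ := List.mem_map.mp ha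
        have := hbd n hn
        simp only [ne_eq, decide_eq_true_eq, Fin.mk.injEq]
        omega
      have h2 : (List.replicate (r - L₀.length) (⟨0, by omega⟩ : Fin (k+1))).filter
          (fun x => decide (x ≠ ⟨0, by omega⟩)) = [] := by
        apply List.filter_eq_nil_iff.mpr
        intro a ha
        have := List.eq_of_mem_replicate ha
        subst this
        simp
      rw [h1, h2, List.append_nil]
    have hmaps : L.map (fun n => (⟨min n k, by omega⟩ : Fin (k+1))) =
        L'.map (fun n => (⟨min n k, by omega⟩ : Fin (k+1))) := by
      rw [← strip L hbnd, ← strip L' hbnd', hlists]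
    have hLL : L = L' := by
      have recov : ∀ (L₀ : List ℕ), (∀ ρ ∈ L₀, 1 ≤ ρ ∧ ρ ≤ k) →
          (L₀.map (fun n => (⟨min n k, by omega⟩ : Fin (k+1)))).map Fin.val = L₀ := by
        intro L₀ hbd
        rw [List.map_map]
        have : ∀ n ∈ L₀, (Fin.val ∘ fun n => (⟨min n k, by omega⟩ : Fin (k+1))) n = id n := by
          intro n hn
          have := hbd n hn
          simp only [Function.comp_apply, id_eq]
          omega
        rw [List.map_congr_left this, List.map_id]
      rw [← recov L hbnd, ← recov L' hbnd', hmaps]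
    have hd2 : DescL S k v L u' := by rw [hLL]; exact hd'
    exact DescL.det hd hd2
  calc {u | NR S k r v u}.ncard
      ≤ (Set.univ : Set (Sym (Fin (k+1)) r)).ncard := by
        apply Set.ncard_le_ncard_of_injOn f (fun a _ => Set.mem_univ _) key
    _ = Fintype.card (Sym (Fin (k+1)) r) := by
        rw [Set.ncard_univ, Nat.card_eq_fintype_card]

lemma sym_card_eq (r : ℕ) : Fintype.card (Sym (Fin (k+1)) r) = (r + k).choose k := by
  rw [Sym.card_sym_eq_multichoose, Fintype.card_fin, Nat.multichoose_eq]
  have h1 : k + 1 + r - 1 = k + r := by omega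
  rw [h1]
  rw [← Nat.choose_symm (by omega : r ≤ k + r)]
  congr 1 <;> omega


/-- the graph induced by `S` -/
def SG (S : W → Finset W) : SimpleGraph W := SimpleGraph.fromRel (fun a b => a ∈ S b)

lemma SG_adj {a b : W} (hS1 : ∀ x, ∀ y ∈ S x, y < x) (h : (SG S).Adj a b) (hba : b < a) :
    b ∈ S a := by
  rcases h with ⟨hne, h | h⟩
  · exact absurd (hS1 b a h) (by exact not_lt.mpr (le_of_lt hba))
  · exact h

lemma norm (hS1 : ∀ x, ∀ y ∈ S x, y < x)
    (hco : ∀ x, ∀ a ∈ S x, ∀ b ∈ S x, a < b → a ∈ S b) :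
    ∀ (n : ℕ) (x u : W) (p : (SG S).Walk x u), p.length ≤ n → p.IsPath →
      (∀ w ∈ p.support, w ≠ x → w ≠ u → u < w) → u ≤ x → Desc S n x u := by
  classical
  intro n
  induction n using Nat.strong_induction_on with
  | _ n IH =>
    intro x u p hlen hpath hint hux
    have hsup_ne : p.support ≠ [] := p.support_ne_nil
    -- maximum of the support
    obtain ⟨M, hMmem, hMmax⟩ : ∃ M ∈ p.support, ∀ w ∈ p.support, w ≤ M := by
      obtain ⟨M, hM1, hM2⟩ := Finset.exists_max_image p.support.toFinset id
        ⟨x, List.mem_toFinset.mpr p.start_mem_support⟩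
      exact ⟨M, List.mem_toFinset.mp hM1, fun w hw => hM2 w (List.mem_toFinset.mpr hw)⟩
    by_cases hMx : M ≤ x
    · -- all support ≤ x : peel the first edge
      cases p with
      | nil =>
        exact Desc.refl _ _
      | @cons _ y _ hadj q =>
        have hxq : x ∉ q.support := ((Walk.cons_isPath_iff hadj q).mp hpath).2
        have hqpath : q.IsPath := ((Walk.cons_isPath_iff hadj q).mp hpath).1
        have hy_supp : y ∈ q.support := q.start_mem_support
        have hy_psupp : y ∈ (Walk.cons hadj q).support := by
          rw [Walk.support_cons]; exact List.mem_cons_of_mem _ hy_supp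
        have hyx : y ≠ x := fun h => hxq (h ▸ hy_supp)
        have hylt : y < x := lt_of_le_of_ne (le_trans (hMmax y hy_psupp) hMx) hyx
        have hySx : y ∈ S x := SG_adj hS1 hadj hylt
        have huy : u ≤ y := by
          cases q with
          | nil => exact le_refl _
          | @cons _ w _ hadj2 q2 =>
            have hu_in : u ∈ q2.support := q2.end_mem_support
            have hy_notin : y ∉ q2.support := ((Walk.cons_isPath_iff hadj2 q2).mp hqpath).2
            have huy_ne : y ≠ u := fun h => hy_notin (h ▸ hu_in)
            exact le_of_lt (hint y hy_psupp hyx huy_ne)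
        have hq_int : ∀ w ∈ q.support, w ≠ y → w ≠ u → u < w := by
          intro w hw _ hwu
          have hwx : w ≠ x := fun h => hxq (h ▸ hw)
          exact hint w (by rw [Walk.support_cons]; exact List.mem_cons_of_mem _ hw) hwx hwu
        have hlen2 : q.length < n := by
          have : (Walk.cons hadj q).length = q.length + 1 := Walk.length_cons _ _
          omega
        have := IH q.length hlen2 y u q le_rfl hqpath hq_int huy
        exact Desc.mono (Desc.step hySx this) (by omega)
    · -- M > x : shortcut M
      push_neg at hMx
      have hMne_x : M ≠ x := ne_of_gt hMx
      have hMne_u : M ≠ u := ne_of_gt (lt_of_le_of_lt hux hMx)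
      set q₁ := p.takeUntil M hMmem with hq₁def
      set q₂ := p.dropUntil M hMmem with hq₂def
      have hspec : q₁.append q₂ = p := p.take_spec hMmem
      have hq₁path : q₁.IsPath := hpath.takeUntil hMmem
      have hq₂path : q₂.IsPath := hpath.dropUntil hMmem
      obtain ⟨b, h2, q₂', hq2eq⟩ := q₂.exists_eq_cons_of_ne (Ne.symm hMne_u).symm
      obtain ⟨a, h1, q₃, hq1eq⟩ := q₁.reverse.exists_eq_cons_of_ne hMne_x
      -- a and b are in the support of p
      have ha_in_q₁ : a ∈ q₁.support := by
        have h' : a ∈ q₁.reverse.support := by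
          rw [hq1eq, Walk.support_cons]
          exact List.mem_cons_of_mem _ q₃.start_mem_support
        rw [Walk.support_reverse, List.mem_reverse] at h'
        exact h'
      have ha_in_p : a ∈ p.support := (Walk.support_takeUntil_subset p hMmem) ha_in_q₁
      have hb_in_q₂' : b ∈ q₂'.support := q₂'.start_mem_support
      have hq2supp : q₂.support = M :: q₂'.support := by
        rw [hq2eq, Walk.support_cons]
      have hb_in_p : b ∈ p.support := (Walk.support_dropUntil_subset p hMmem)
        (by rw [← hq₂def, hq2supp]; exact List.mem_cons_of_mem _ hb_in_q₂')
      -- a ≠ M, b ≠ M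
      have haM : a ≠ M := by
        have : q₁.reverse.IsPath := hq₁path.reverse
        rw [hq1eq, Walk.cons_isPath_iff] at this
        exact fun h => this.2 (h ▸ q₃.start_mem_support)
      have hbM : b ≠ M := by
        have := hq₂path
        rw [hq2eq, Walk.cons_isPath_iff] at this
        exact fun h => this.2 (h ▸ hb_in_q₂')
      have haltM : a < M := lt_of_le_of_ne (hMmax a ha_in_p) haM
      have hbltM : b < M := lt_of_le_of_ne (hMmax b hb_in_p) hbM
      have haS : a ∈ S M := SG_adj hS1 h1 haltM
      have hbS : b ∈ S M := SG_adj hS1 h2 hbltM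
      -- a ≠ b by disjointness of the two parts of the path
      have hab : a ≠ b := by
        have hsupp : p.support = q₁.support ++ q₂.support.tail := by
          rw [← hspec, Walk.support_append]
        have hnodup : (q₁.support ++ q₂.support.tail).Nodup := by
          rw [← hsupp]; exact hpath.support_nodup
        have hdisj := List.disjoint_of_nodup_append hnodup
        intro h
        apply hdisj ha_in_q₁
        rw [hq2supp, List.tail_cons]
        exact h ▸ hb_in_q₂'
      -- edge between a and b
      have hadj_ab : (SG S).Adj a b := by
        rcases lt_trichotomy a b with hlt | heq | hlt
        · exact ⟨hab, Or.inl (hco M a haS b hbS hlt)⟩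
        · exact absurd heq hab
        · exact ⟨hab, Or.inr (hco M b hbS a haS hlt)⟩
      -- the new, shorter walk
      set wNew : (SG S).Walk x u := q₃.reverse.append (Walk.cons hadj_ab q₂') with hwNew
      have hlen_new : wNew.length + 1 = p.length := by
        have h1len : q₁.length = q₃.length + 1 := by
          have : q₁.reverse.length = q₃.length + 1 := by rw [hq1eq, Walk.length_cons]
          rwa [Walk.length_reverse] at this
        have h2len : q₂.length = q₂'.length + 1 := by rw [hq2eq, Walk.length_cons]
        have hplen : p.length = q₁.length + q₂.length := by
          rw [← hspec, Walk.length_append]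
        rw [hwNew, Walk.length_append, Walk.length_reverse, Walk.length_cons]
        omega
      have hsub_new : ∀ w ∈ wNew.support, w ∈ p.support := by
        intro w hw
        rw [hwNew, Walk.support_append] at hw
        rcases List.mem_append.mp hw with hw | hw
        · rw [Walk.support_reverse, List.mem_reverse] at hw
          have : w ∈ q₁.reverse.support := by
            rw [hq1eq, Walk.support_cons]; exact List.mem_cons_of_mem _ hw
          rw [Walk.support_reverse, List.mem_reverse] at this
          exact (Walk.support_takeUntil_subset p hMmem) this
        · have hw' : w ∈ q₂'.support := by
            rwa [Walk.support_cons, List.tail_cons] at hw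
          have hw'' : w ∈ q₂.support := by
            rw [hq2supp]; exact List.mem_cons_of_mem _ hw'
          exact (Walk.support_dropUntil_subset p hMmem) hw''
      -- recurse on the bypass
      set pNew := wNew.bypass with hpNew
      have hpNew_path : pNew.IsPath := Walk.bypass_isPath _
      have hpNew_len : pNew.length ≤ n - 1 := by
        have h1 : pNew.length ≤ wNew.length := by
          rw [hpNew]; exact Walk.length_bypass_le wNew
        omega
      have hpNew_int : ∀ w ∈ pNew.support, w ≠ x → w ≠ u → u < w := by
        intro w hw
        exact hint w (hsub_new w ((Walk.support_bypass_subset _) hw))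
      have hn1 : n - 1 < n := by
        have : 1 ≤ p.length := by
          rcases Nat.eq_zero_or_pos p.length with h0 | h1
          · exfalso
            have hplen : p.length = q₁.length + q₂.length := by
              rw [← hspec, Walk.length_append]
            have h2len : q₂.length = q₂'.length + 1 := by rw [hq2eq, Walk.length_cons]
            omega
          · exact h1
        omega
      have := IH (n-1) hn1 x u pNew hpNew_len hpNew_path hpNew_int hux
      exact Desc.mono this (by omega)



variable {S : W → Finset W} {k : ℕ}

lemma desc_nr (hS1 : ∀ x, ∀ y ∈ S x, y < x) (hS2 : ∀ x, (S x).card ≤ k)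
    (hco : ∀ x, ∀ a ∈ S x, ∀ b ∈ S x, a < b → a ∈ S b)
    {r : ℕ} {x u : W} (h : Desc S r x u) : NR S k r x u := by
  induction h with
  | refl r x => exact ⟨[], DescL.nil _, by simp, List.Pairwise.nil, by simp⟩
  | @step r x y u hy hd IH =>
    exact glue hS1 hS2 hco (r * (Fintype.card W + 1) + bel y) r x y u le_rfl hy IH

lemma wreach_bound
    (hS1 : ∀ x, ∀ y ∈ S x, y < x) (hS2 : ∀ x, (S x).card ≤ k)
    (hco : ∀ x, ∀ a ∈ S x, ∀ b ∈ S x, a < b → a ∈ S b)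
    (G : SimpleGraph W) (hGS : ∀ a b : W, G.Adj a b → a < b → a ∈ S b)
    (r : ℕ) (v : W) :
    (WReach G ‹LinearOrder W› r v).ncard ≤ (r + k).choose k := by
  have hle : G ≤ SG S := by
    intro a b hab
    rcases lt_trichotomy a b with h | h | h
    · exact ⟨hab.ne, Or.inl (hGS a b hab h)⟩
    · exact absurd h hab.ne
    · exact ⟨hab.ne, Or.inr (hGS b a hab.symm h)⟩
  have hsub : WReach G ‹LinearOrder W› r v ⊆ {u | Desc S r v u} := by
    intro u hu
    obtain ⟨hule, p, hp, hlen, hint⟩ := hu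
    let p' := p.mapLe hle
    have hsupp : p'.support = p.support := by
      have hid : ⇑(SimpleGraph.Hom.ofLE hle) = id := rfl
      show (p.map (SimpleGraph.Hom.ofLE hle)).support = p.support
      rw [Walk.support_map, hid, List.map_id]
    have hlen' : p'.length = p.length := Walk.length_map _ p
    refine norm hS1 hco r v u p' (by rw [hlen']; exact hlen) (hp.mapLe hle) ?_ hule
    intro w hw
    exact hint w (hsupp ▸ hw)
  have hsub2 : {u | Desc S r v u} ⊆ {u | NR S k r v u} :=
    fun u hu => desc_nr hS1 hS2 hco hu
  have h1 : (WReach G ‹LinearOrder W› r v).ncard ≤ {u | NR S k r v u}.ncard :=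
    Set.ncard_le_ncard (subset_trans hsub hsub2) (Set.toFinite _)
  have h2 := nr_count (S := S) (k := k) v r
  have h3 := sym_card_eq (k := k) r
  omega

end Abstract

section Tree
variable {ι : Type} [Fintype ι] [DecidableEq ι] {T : SimpleGraph ι}

/-- the chosen path between two vertices of a tree -/
noncomputable def pth (hc : T.Connected) (x y : ι) : T.Walk x y :=
  ((hc.preconnected x y).some).bypass

lemma pth_isPath (hc : T.Connected) (x y : ι) : (pth hc x y).IsPath := Walk.bypass_isPath _

lemma path_eq (ha : T.IsAcyclic) {x y : ι} (p q : T.Walk x y) (hp : p.IsPath) (hq : q.IsPath) :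
    p = q :=
  congrArg Subtype.val (ha.path_unique ⟨p, hp⟩ ⟨q, hq⟩)

lemma isPath_length (hc : T.Connected) (ha : T.IsAcyclic) {x y : ι} (p : T.Walk x y)
    (hp : p.IsPath) : p.length = T.dist x y := by
  obtain ⟨q, hq⟩ := (hc.preconnected x y).exists_walk_length_eq_dist
  have hqp : q.IsPath := q.isPath_of_length_eq_dist hq
  rw [path_eq ha p q hp hqp, hq]

lemma dist_split (hc : T.Connected) (ha : T.IsAcyclic) {x y w : ι} (p : T.Walk x y)
    (hp : p.IsPath) (h : w ∈ p.support) :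
    T.dist x w + T.dist w y = T.dist x y := by
  have h1 : (p.takeUntil w h).length = T.dist x w := isPath_length hc ha _ (hp.takeUntil h)
  have h2 : (p.dropUntil w h).length = T.dist w y := isPath_length hc ha _ (hp.dropUntil h)
  have h3 : (p.takeUntil w h).length + (p.dropUntil w h).length = p.length := by
    rw [← Walk.length_append, Walk.take_spec]
  have h4 : p.length = T.dist x y := isPath_length hc ha p hp
  omega

lemma adj_depth (hc : T.Connected) (ha : T.IsAcyclic) (z : ι) {x y : ι} (h : T.Adj x y) :
    T.dist x z = T.dist y z + 1 ∨ T.dist y z = T.dist x z + 1 := by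
  by_cases hy : y ∈ (pth hc x z).support
  · left
    have := dist_split hc ha (pth hc x z) (pth_isPath hc x z) hy
    have h1 : T.dist x y = 1 := by rw [SimpleGraph.dist_eq_one_iff_adj]; exact h
    omega
  · right
    have hW : (Walk.cons h.symm (pth hc x z)).IsPath := by
      rw [Walk.cons_isPath_iff]
      exact ⟨pth_isPath hc x z, hy⟩
    have := isPath_length hc ha _ hW
    rw [Walk.length_cons, isPath_length hc ha _ (pth_isPath hc x z)] at this
    omega

lemma unique_parent (hc : T.Connected) (ha : T.IsAcyclic) (z : ι) {x p₁ p₂ : ι}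
    (h1 : T.Adj x p₁) (h2 : T.Adj x p₂)
    (hd1 : T.dist x z = T.dist p₁ z + 1) (hd2 : T.dist x z = T.dist p₂ z + 1) : p₁ = p₂ := by
  have key : ∀ (p : ι), T.Adj x p → T.dist x z = T.dist p z + 1 → x ∉ (pth hc p z).support := by
    intro p hp hd hmem
    have := dist_split hc ha (pth hc p z) (pth_isPath hc p z) hmem
    have hpos : 0 < T.dist p x := hc.pos_dist_of_ne (Ne.symm hp.ne)
    omega
  have hW1 : (Walk.cons h1 (pth hc p₁ z)).IsPath := by
    rw [Walk.cons_isPath_iff]; exact ⟨pth_isPath hc p₁ z, key p₁ h1 hd1⟩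
  have hW2 : (Walk.cons h2 (pth hc p₂ z)).IsPath := by
    rw [Walk.cons_isPath_iff]; exact ⟨pth_isPath hc p₂ z, key p₂ h2 hd2⟩
  have heq := path_eq ha _ _ hW1 hW2
  have hsup := congrArg Walk.support heq
  rw [Walk.support_cons, Walk.support_cons] at hsup
  have h3 := ((List.cons.injEq _ _ _ _).mp hsup).2
  rw [Walk.support_eq_cons (pth hc p₁ z), Walk.support_eq_cons (pth hc p₂ z)] at h3
  exact ((List.cons.injEq _ _ _ _).mp h3).1

lemma no_up_descent (hc : T.Connected) (ha : T.IsAcyclic) (z : ι) {y b : ι} (R : T.Walk y b) :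
    ∀ (a : ι) (h : T.Adj a y), (Walk.cons h R).IsPath →
      T.dist y z = T.dist a z + 1 → T.dist b z ≤ T.dist a z → False := by
  induction R with
  | nil =>
    intro a h _ hup hle
    omega
  | @cons y w b h' R' IH =>
    intro a h hpath hup hle
    rcases adj_depth hc ha z h' with hdown | hup2
    · have haw : a = w := unique_parent hc ha z h.symm h' hup hdown
      have hw_in : w ∈ (Walk.cons h' R').support := by
        rw [Walk.support_cons]
        exact List.mem_cons_of_mem _ R'.start_mem_support
      have := ((Walk.cons_isPath_iff _ _).mp hpath).2
      exact this (haw ▸ hw_in)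
    · exact IH y h' ((Walk.cons_isPath_iff _ _).mp hpath).1 hup2 (by omega)

end Tree

section Tree2
variable {ι : Type} [Fintype ι] [DecidableEq ι] {T : SimpleGraph ι} {Vt : Type*}
variable (Bag : ι → Finset Vt)

lemma t_exists (hcov : ∀ v : Vt, ∃ x, v ∈ Bag x) (z : ι) (v : Vt) :
    ∃ x, v ∈ Bag x ∧ ∀ y, v ∈ Bag y → T.dist x z ≤ T.dist y z := by
  classical
  obtain ⟨x₀, hx₀⟩ := hcov v
  obtain ⟨x, hx1, hx2⟩ := Finset.exists_min_image
    (Finset.univ.filter (fun y => v ∈ Bag y)) (fun y => T.dist y z)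
    ⟨x₀, Finset.mem_filter.mpr ⟨Finset.mem_univ _, hx₀⟩⟩
  exact ⟨x, (Finset.mem_filter.mp hx1).2,
    fun y hy => hx2 y (Finset.mem_filter.mpr ⟨Finset.mem_univ _, hy⟩)⟩

/-- the minimum-depth bag containing `v` -/
noncomputable def tb (T : SimpleGraph ι) (hcov : ∀ v : Vt, ∃ x, v ∈ Bag x) (z : ι) (v : Vt) : ι :=
  (t_exists (T := T) Bag hcov z v).choose

lemma tb_mem (hcov : ∀ v : Vt, ∃ x, v ∈ Bag x) (z : ι) (v : Vt) :
    v ∈ Bag (tb Bag T hcov z v) := (t_exists (T := T) Bag hcov z v).choose_spec.1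

lemma tb_min (hcov : ∀ v : Vt, ∃ x, v ∈ Bag x) (z : ι) (v : Vt) :
    ∀ y, v ∈ Bag y → T.dist (tb Bag T hcov z v) z ≤ T.dist y z :=
  (t_exists (T := T) Bag hcov z v).choose_spec.2

lemma tb_on_path (hc : T.Connected) (ha : T.IsAcyclic)
    (hcov : ∀ v : Vt, ∃ x, v ∈ Bag x)
    (hco : ∀ (v : Vt) (x y : ι), v ∈ Bag x → v ∈ Bag y →
        ∀ p : T.Walk x y, p.IsPath → ∀ w ∈ p.support, v ∈ Bag w)
    (z : ι) (v : Vt) :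
    ∀ (n : ℕ) (x : ι), T.dist x z ≤ n → v ∈ Bag x →
      tb Bag T hcov z v ∈ (pth hc x z).support := by
  intro n
  induction n with
  | zero =>
    intro x hxz hx
    have hx0 : T.dist x z = 0 := by omega
    have ht0 : T.dist (tb Bag T hcov z v) z = 0 :=
      le_antisymm (le_trans (tb_min Bag hcov z v x hx) (le_of_eq hx0)) (Nat.zero_le _)
    have hxz' : x = z := (hc.dist_eq_zero_iff).mp hx0
    have htz : tb Bag T hcov z v = z := (hc.dist_eq_zero_iff).mp ht0
    rw [htz, hxz']
    exact Walk.start_mem_support _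
  | succ n IH =>
    intro x hxz hx
    by_cases hxt : x = tb Bag T hcov z v
    · rw [← hxt]
      exact Walk.start_mem_support _
    · -- the path from x to t v starts with a step towards the root
      obtain ⟨y, hadj, Q', hQeq⟩ :=
        (pth hc x (tb Bag T hcov z v)).exists_eq_cons_of_ne hxt
      have hQpath := pth_isPath hc x (tb Bag T hcov z v)
      have hyBag : v ∈ Bag y := by
        refine hco v x (tb Bag T hcov z v) hx (tb_mem Bag hcov z v) _ hQpath y ?_
        rw [hQeq, Walk.support_cons]
        exact List.mem_cons_of_mem _ Q'.start_mem_support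
      rcases adj_depth hc ha z hadj with hdown | hup
      · -- depth decreases: y is the parent of x; recurse
        -- first step of pth x z is also the parent
        have hxz_ne : x ≠ z := by
          intro h
          rw [h] at hdown
          simp [SimpleGraph.dist_self] at hdown
        obtain ⟨y', hadj', P', hPeq⟩ := (pth hc x z).exists_eq_cons_of_ne hxz_ne
        have hPpath := pth_isPath hc x z
        have hP'path : P'.IsPath := by
          rw [hPeq] at hPpath
          exact hPpath.of_cons
        have hy'dist : T.dist x z = T.dist y' z + 1 := by
          have hl1 : (pth hc x z).length = T.dist x z := isPath_length hc ha _ hPpath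
          have hl2 : P'.length = T.dist y' z := isPath_length hc ha _ hP'path
          rw [hPeq, Walk.length_cons] at hl1
          omega
        have hyy' : y = y' := unique_parent hc ha z hadj hadj' hdown hy'dist
        have hIH : tb Bag T hcov z v ∈ (pth hc y z).support := by
          apply IH y (by omega) hyBag
        have hP'eq : P' = pth hc y' z := path_eq ha _ _ hP'path (pth_isPath hc y' z)
        rw [hPeq, Walk.support_cons]
        apply List.mem_cons_of_mem
        rw [hP'eq, ← hyy']
        exact hIH
      · -- depth increases: impossible since t v is at minimal depth
        exfalso
        have hQ'path : (Walk.cons hadj Q').IsPath := by rw [← hQeq]; exact hQpath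
        refine no_up_descent hc ha z Q' x hadj hQ'path hup ?_
        exact tb_min Bag hcov z v x hx

lemma shared_bag (hc : T.Connected) (ha : T.IsAcyclic)
    (hcov : ∀ v : Vt, ∃ x, v ∈ Bag x)
    (hco : ∀ (v : Vt) (x y : ι), v ∈ Bag x → v ∈ Bag y →
        ∀ p : T.Walk x y, p.IsPath → ∀ w ∈ p.support, v ∈ Bag w)
    (z : ι) (u v : Vt) (x : ι) (hu : u ∈ Bag x) (hv : v ∈ Bag x)
    (hD : T.dist (tb Bag T hcov z u) z ≤ T.dist (tb Bag T hcov z v) z) :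
    u ∈ Bag (tb Bag T hcov z v) := by
  have h1 : tb Bag T hcov z u ∈ (pth hc x z).support :=
    tb_on_path Bag hc ha hcov hco z u (T.dist x z) x le_rfl hu
  have h2 : tb Bag T hcov z v ∈ (pth hc x z).support :=
    tb_on_path Bag hc ha hcov hco z v (T.dist x z) x le_rfl hv
  have hPpath := pth_isPath hc x z
  set A := (pth hc x z).takeUntil (tb Bag T hcov z u) h1 with hA
  set B := (pth hc x z).dropUntil (tb Bag T hcov z u) h1 with hB
  have hApath : A.IsPath := hPpath.takeUntil h1
  have hBpath : B.IsPath := hPpath.dropUntil h1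
  have hsupp : (pth hc x z).support = A.support ++ B.support.tail := by
    rw [hA, hB, ← Walk.support_append, Walk.take_spec]
  have hcase : tb Bag T hcov z v ∈ A.support := by
    rw [hsupp] at h2
    rcases List.mem_append.mp h2 with h | h
    · exact h
    · -- in the second part: depths force equality with t u
      have h' : tb Bag T hcov z v ∈ B.support := List.mem_of_mem_tail h
      have := dist_split hc ha B hBpath h'
      have heq : tb Bag T hcov z v = tb Bag T hcov z u := by
        have hd0 : T.dist (tb Bag T hcov z u) (tb Bag T hcov z v) = 0 := by omega
        exact ((hc.dist_eq_zero_iff).mp hd0).symm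
      rw [heq]
      exact Walk.end_mem_support _
  exact hco u x (tb Bag T hcov z u) hu (tb_mem Bag hcov z u) A hApath _ hcase

end Tree2


theorem stmt9 [Fintype V] (G : SimpleGraph V) (k r : ℕ) (hr : 0 < r)
    (htw : ∃ (ι : Type) (_ : Fintype ι) (T : SimpleGraph ι) (Bag : ι → Finset V),
      T.Connected ∧ T.IsAcyclic ∧
      (∀ v : V, ∃ x, v ∈ Bag x) ∧
      (∀ (v : V) (x y : ι), v ∈ Bag x → v ∈ Bag y →
        ∀ p : T.Walk x y, p.IsPath → ∀ z ∈ p.support, v ∈ Bag z) ∧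
      (∀ u v : V, G.Adj u v → ∃ x, u ∈ Bag x ∧ v ∈ Bag x) ∧
      (∀ x, (Bag x).card ≤ k + 1)) :
    wcol G r ≤ (r + k).choose k := by
  classical
  obtain ⟨ι, hι, T, Bag, hc, ha, hcov, hpathcond, hedge, hcard⟩ := htw
  obtain ⟨z⟩ : Nonempty ι := hc.nonempty
  -- the linear order on V
  let e : V → ℕ := fun v => ((Fintype.equivFin V) v : ℕ)
  have he : Function.Injective e := fun a b h =>
    (Fintype.equivFin V).injective (Fin.val_injective h)
  let key : V → ℕ ×ₗ ℕ := fun v => toLex (T.dist (tb Bag T hcov z v) z, e v)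
  have hkey : Function.Injective key := by
    intro a b h
    have h2 : (T.dist (tb Bag T hcov z a) z, e a) = (T.dist (tb Bag T hcov z b) z, e b) :=
      congrArg (fun x => ofLex x) h
    exact he (congrArg Prod.snd h2)
  letI π : LinearOrder V := LinearOrder.lift' key hkey
  have hlt_iff : ∀ a b : V, a < b ↔ key a < key b := fun a b => Iff.rfl
  have hlt_dist : ∀ a b : V, a < b →
      T.dist (tb Bag T hcov z a) z ≤ T.dist (tb Bag T hcov z b) z := by
    intro a b hab
    rw [hlt_iff] at hab
    rcases Prod.Lex.lt_iff.mp hab with h | h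
    · exact le_of_lt h
    · exact le_of_eq h.1
  -- the system S
  let S : V → Finset V := fun v => ((Bag (tb Bag T hcov z v)).erase v).filter (fun u => u < v)
  have hS1 : ∀ x, ∀ y ∈ S x, y < x := by
    intro x y hy
    exact (Finset.mem_filter.mp hy).2
  have hS2 : ∀ x, (S x).card ≤ k := by
    intro x
    have h1 : ((Bag (tb Bag T hcov z x)).erase x).card
        = (Bag (tb Bag T hcov z x)).card - 1 :=
      Finset.card_erase_of_mem (tb_mem (T := T) Bag hcov z x)
    have h2 := hcard (tb Bag T hcov z x)
    calc (S x).card ≤ ((Bag (tb Bag T hcov z x)).erase x).card := Finset.card_filter_le _ _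
      _ ≤ k := by omega
  have hmemS : ∀ (u v : V), u ∈ Bag (tb Bag T hcov z v) → u < v → u ∈ S v := by
    intro u v h1 h2
    exact Finset.mem_filter.mpr ⟨Finset.mem_erase.mpr ⟨ne_of_lt h2, h1⟩, h2⟩
  have hco : ∀ x, ∀ a ∈ S x, ∀ b ∈ S x, a < b → a ∈ S b := by
    intro x a haS b hbS hab
    have ha1 : a ∈ Bag (tb Bag T hcov z x) :=
      Finset.mem_of_mem_erase (Finset.mem_filter.mp haS).1
    have hb1 : b ∈ Bag (tb Bag T hcov z x) :=
      Finset.mem_of_mem_erase (Finset.mem_filter.mp hbS).1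
    have := shared_bag Bag hc ha hcov hpathcond z a b _ ha1 hb1 (hlt_dist a b hab)
    exact hmemS a b this hab
  have hGS : ∀ a b : V, G.Adj a b → a < b → a ∈ S b := by
    intro a b hab hlt
    obtain ⟨x, hx1, hx2⟩ := hedge a b hab
    have := shared_bag Bag hc ha hcov hpathcond z a b x hx1 hx2 (hlt_dist a b hlt)
    exact hmemS a b this hlt
  apply Nat.sInf_le
  refine ⟨π, fun v => ?_⟩
  exact wreach_bound (S := S) (k := k) hS1 hS2 hco G hGS r v
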